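/- Let f, g be proper closed convex functions on real Hilbert spaces H and G respectively, A : H → G continuous linear, λ > 0, and α ∈ (0,1]. Define the primal RPRS operator T₁ = (1−α)I + α(2 prox_{λ(g∘A)} − I)(2 prox_{λ f} − I) on H, and the dual RPRS operator T₂ = (1−α)I + α(2 prox_{λ⁻¹(g∘A)*(−·)} − I)(2 prox_{λ⁻¹ f*} − I) on H. If w₂ = w₁/λ, then T₂(w₂) = T₁(w₁)/λ. -/

import Mathlib

noncomputable def econj {E : Type*} [NormedAddCommGroup E] [InnerProductSpace ℝ E]
    (f : E → EReal) (v : E) : EReal :=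
  ⨆ x : E, ((inner ℝ v x : ℝ) : EReal) - f x

def EConvex {E : Type*} [NormedAddCommGroup E] [InnerProductSpace ℝ E] (f : E → EReal) : Prop :=
  ∀ x y : E, ∀ a b : ℝ, 0 ≤ a → 0 ≤ b → a + b = 1 →
    f (a • x + b • y) ≤ (a : EReal) * f x + (b : EReal) * f y

/-- `f` is proper: somewhere finite and nowhere `-∞`. -/
def Proper {E : Type*} (f : E → EReal) : Prop :=
  (∃ x, f x ≠ ⊤) ∧ ∀ x, f x ≠ ⊥

/-- `p` is the proximal point of `f` at `w`, i.e. `p` minimizes `y ↦ f y + ½‖y - w‖²`. -/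
def IsProx {E : Type*} [NormedAddCommGroup E] [InnerProductSpace ℝ E]
    (f : E → EReal) (w p : E) : Prop :=
  ∀ y : E, f p + (((1 : ℝ) / 2 * ‖p - w‖ ^ 2 : ℝ) : EReal)
    ≤ f y + (((1 : ℝ) / 2 * ‖y - w‖ ^ 2 : ℝ) : EReal)

open RealInnerProductSpace

lemma ereal_eq_coe {x : EReal} (h1 : x ≠ ⊤) (h2 : x ≠ ⊥) : ∃ r : ℝ, x = (r : EReal) :=
  ⟨x.toReal, (EReal.coe_toReal h1 h2).symm⟩

lemma prox_subgrad {E : Type*} [NormedAddCommGroup E] [InnerProductSpace ℝ E]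
    (f : E → EReal) (hprop : Proper f) (hconv : EConvex f)
    (l : ℝ) (hl : 0 < l) (w p : E)
    (hprox : IsProx (fun y => (l : EReal) * f y) w p) :
    ∃ P : ℝ, f p = (P : EReal) ∧
      ∀ y (Y : ℝ), f y = (Y : EReal) → ⟪w - p, y - p⟫ ≤ l * (Y - P) := by
  obtain ⟨⟨x₀, hx₀⟩, hbot⟩ := hprop
  obtain ⟨X₀, hX₀⟩ := ereal_eq_coe hx₀ (hbot x₀)
  -- f p is finite
  have hpt : f p ≠ ⊤ := by
    intro htop
    have h := hprox x₀
    simp only [htop, hX₀] at h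
    rw [EReal.coe_mul_top_of_pos hl, EReal.top_add_coe, ← EReal.coe_mul, ← EReal.coe_add,
      top_le_iff] at h
    exact EReal.coe_ne_top _ h
  obtain ⟨P, hP⟩ := ereal_eq_coe hpt (hbot p)
  refine ⟨P, hP, ?_⟩
  intro y Y hY
  -- key: for all t ∈ (0,1], inequality with error term
  have key : ∀ t : ℝ, 0 < t → t ≤ 1 → ⟪w - p, y - p⟫ ≤ l * (Y - P) + t / 2 * ‖y - p‖ ^ 2 := by
    intro t ht0 ht1
    set z := (1 - t) • p + t • y with hz
    have hcz : f z ≤ (((1 - t) * P + t * Y : ℝ) : EReal) := by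
      have := hconv p y (1 - t) t (by linarith) (le_of_lt ht0) (by ring)
      rw [hP, hY, ← EReal.coe_mul, ← EReal.coe_mul, ← EReal.coe_add] at this
      exact this
    have hzt : f z ≠ ⊤ := ne_top_of_le_ne_top (EReal.coe_ne_top _) hcz
    obtain ⟨Z, hZ⟩ := ereal_eq_coe hzt (hbot z)
    have hZle : Z ≤ (1 - t) * P + t * Y := by
      rw [hZ] at hcz; exact_mod_cast hcz
    have hpx := hprox z
    simp only [hP, hZ] at hpx
    rw [← EReal.coe_mul, ← EReal.coe_mul, ← EReal.coe_add, ← EReal.coe_add,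
      EReal.coe_le_coe_iff] at hpx
    -- z - w = (p - w) + t • (y - p)
    have hzw : z - w = (p - w) + t • (y - p) := by
      rw [hz]; module
    have hnorm : ‖z - w‖ ^ 2 = ‖p - w‖ ^ 2 + 2 * (t * ⟪p - w, y - p⟫) + t ^ 2 * ‖y - p‖ ^ 2 := by
      rw [hzw, ← real_inner_self_eq_norm_sq]
      simp only [inner_add_add_self, real_inner_smul_left, real_inner_smul_right,
        real_inner_self_eq_norm_sq, norm_smul, Real.norm_eq_abs, mul_pow, sq_abs,
        real_inner_comm (y - p) (p - w)]
      ring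
    have hip : ⟪w - p, y - p⟫ = -⟪p - w, y - p⟫ := by
      rw [← inner_neg_left, neg_sub]
    rw [hip]
    nlinarith [hpx, hZle, hnorm, sq_nonneg t, norm_nonneg (y - p)]
  -- let t → 0
  refine le_of_forall_pos_le_add ?_
  intro ε hε
  set t : ℝ := min 1 (2 * ε / (‖y - p‖ ^ 2 + 1)) with htdef
  have hd : 0 < ‖y - p‖ ^ 2 + 1 := by positivity
  have ht0 : 0 < t := lt_min one_pos (by positivity)
  have ht1 : t ≤ 1 := min_le_left _ _
  have h2 : t ≤ 2 * ε / (‖y - p‖ ^ 2 + 1) := min_le_right _ _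
  have := key t ht0 ht1
  have herr : t / 2 * ‖y - p‖ ^ 2 ≤ ε := by
    rw [le_div_iff₀ hd] at h2
    nlinarith [sq_nonneg (‖y - p‖)]
  linarith
lemma moreau_unique {E : Type*} [NormedAddCommGroup E] [InnerProductSpace ℝ E]
    (f : E → EReal) (x₀ : E) (hx₀ : f x₀ ≠ ⊤) (hbot : ∀ x, f x ≠ ⊥)
    (l : ℝ) (hl : 0 < l) (w p : E) (P : ℝ) (hP : f p = (P : EReal))
    (hsub : ∀ y (Y : ℝ), f y = (Y : EReal) → ⟪w - p, y - p⟫ ≤ l * (Y - P))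
    (q : E) (hq : IsProx (fun v => ((l⁻¹ : ℝ) : EReal) * econj f v) (l⁻¹ • w) q) :
    q = l⁻¹ • (w - p) := by
  obtain ⟨X₀, hX₀⟩ := ereal_eq_coe hx₀ (hbot x₀)
  have hl' : (0:ℝ) < l⁻¹ := inv_pos.2 hl
  set u : E := l⁻¹ • (w - p) with hu
  set c : E := l⁻¹ • w with hc
  -- lower bound for econj everywhere
  have hlow : ∀ v : E, ((⟪v, p⟫ - P : ℝ) : EReal) ≤ econj f v := by
    intro v
    have := le_iSup (fun x => ((inner ℝ v x : ℝ) : EReal) - f x) p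
    rw [hP, ← EReal.coe_sub] at this
    exact this
  -- exact value at u
  have hU : econj f u = ((⟪u, p⟫ - P : ℝ) : EReal) := by
    refine le_antisymm (iSup_le fun x => ?_) (hlow u)
    rcases eq_or_ne (f x) ⊤ with hx | hx
    · rw [hx, EReal.sub_top]; exact bot_le
    obtain ⟨X, hX⟩ := ereal_eq_coe hx (hbot x)
    rw [hX, ← EReal.coe_sub, EReal.coe_le_coe_iff]
    have h1 := hsub x X hX
    have h2 : ⟪u, x - p⟫ = l⁻¹ * ⟪w - p, x - p⟫ := real_inner_smul_left _ _ _
    have h3 : ⟪u, x⟫ - ⟪u, p⟫ = ⟪u, x - p⟫ := (inner_sub_right u x p).symm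
    have h4 : l⁻¹ * (l * (X - P)) = X - P := by field_simp
    nlinarith [mul_le_mul_of_nonneg_left h1 (le_of_lt hl')]
  -- econj f q is finite
  have hqbot : econj f q ≠ ⊥ := by
    intro h
    have := hlow q
    rw [h, le_bot_iff] at this
    exact EReal.coe_ne_bot _ this
  have hprx := hq u
  simp only [hU, ← EReal.coe_mul] at hprx
  have hqtop : econj f q ≠ ⊤ := by
    intro h
    rw [h, EReal.mul_top_of_pos (by exact_mod_cast hl'), EReal.top_add_coe, top_le_iff,
      ← EReal.coe_add] at hprx
    exact EReal.coe_ne_top _ hprx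
  obtain ⟨Q, hQ⟩ := ereal_eq_coe hqtop hqbot
  rw [hQ, ← EReal.coe_mul, ← EReal.coe_add, ← EReal.coe_add, EReal.coe_le_coe_iff] at hprx
  have hQlow : ⟪q, p⟫ - P ≤ Q := by
    have := hlow q; rw [hQ, EReal.coe_le_coe_iff] at this; exact this
  -- geometry
  have huc : u - c = -(l⁻¹ • p) := by rw [hu, hc]; module
  have hexp : ‖q - c‖ ^ 2 = ‖q - u‖ ^ 2 + 2 * ⟪q - u, u - c⟫ + ‖u - c‖ ^ 2 := by
    have : q - c = (q - u) + (u - c) := by module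
    rw [this, ← real_inner_self_eq_norm_sq]
    simp only [inner_add_add_self, real_inner_self_eq_norm_sq, real_inner_comm (u - c)]
    ring
  have hcross : ⟪q - u, u - c⟫ = -(l⁻¹ * ⟪q - u, p⟫) := by
    rw [huc, inner_neg_right, real_inner_smul_right]
  have hqup : ⟪q - u, p⟫ = ⟪q, p⟫ - ⟪u, p⟫ := inner_sub_left _ _ _
  have hfin : ‖q - u‖ ^ 2 ≤ 0 := by nlinarith [mul_le_mul_of_nonneg_left hQlow (le_of_lt hl')]
  have : ‖q - u‖ = 0 := by nlinarith [norm_nonneg (q - u), sq_nonneg (‖q - u‖)]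
  have := norm_eq_zero.mp this
  rw [sub_eq_zero] at this
  exact this

lemma isProx_neg {E : Type*} [NormedAddCommGroup E] [InnerProductSpace ℝ E]
    (φ : E → EReal) (w q : E)
    (h : IsProx (fun v => φ (-v)) w q) : IsProx φ (-w) (-q) := by
  intro y
  have hy := h (-y)
  simp only [neg_neg] at hy
  have e1 : ‖-q - -w‖ = ‖q - w‖ := by rw [neg_sub_neg, norm_sub_rev]
  have e2 : ‖y - -w‖ = ‖-y - w‖ := by
    rw [sub_neg_eq_add, ← norm_neg (y + w)]; congr 1; abel
  rw [e1, e2]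
  exact hy

/-- RPRS on the primal `min f + g∘A` and RPRS on the dual
`min f* + (g∘A)*(−·)` are equivalent via the scaling `w₂ = w₁/λ`. -/
theorem stmt14 {H G : Type*} [NormedAddCommGroup H] [InnerProductSpace ℝ H]
    [NormedAddCommGroup G] [InnerProductSpace ℝ G]
    (f : H → EReal) (hf : Proper f) (hfc : LowerSemicontinuous f) (hfconv : EConvex f)
    (g : G → EReal) (hg : Proper g) (hgc : LowerSemicontinuous g) (hgconv : EConvex g)
    (A : H →L[ℝ] G)
    (hgA : Proper (fun x : H => g (A x)))
    (hgAc : LowerSemicontinuous (fun x : H => g (A x)))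
    (hgAconv : EConvex (fun x : H => g (A x)))
    (l : ℝ) (hl : 0 < l) (α : ℝ) (hα0 : 0 < α) (hα1 : α ≤ 1)
    (Pf PgA Pfs Pgs : H → H)
    (hPf : ∀ w, IsProx (fun y => (l : EReal) * f y) w (Pf w))
    (hPgA : ∀ w, IsProx (fun y => (l : EReal) * g (A y)) w (PgA w))
    (hPfs : ∀ w, IsProx (fun y => ((l⁻¹ : ℝ) : EReal) * econj f y) w (Pfs w))
    (hPgs : ∀ w, IsProx
      (fun y => ((l⁻¹ : ℝ) : EReal) * econj (fun x : H => g (A x)) (-y)) w (Pgs w))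
    (w₁ w₂ : H) (hw : w₂ = l⁻¹ • w₁) :
    (1 - α) • w₂ + α • ((2 : ℝ) • Pgs ((2 : ℝ) • Pfs w₂ - w₂) - ((2 : ℝ) • Pfs w₂ - w₂))
      = l⁻¹ • ((1 - α) • w₁ +
          α • ((2 : ℝ) • PgA ((2 : ℝ) • Pf w₁ - w₁) - ((2 : ℝ) • Pf w₁ - w₁))) := by
  set h : H → EReal := fun x => g (A x) with hh
  set p₁ : H := Pf w₁ with hp₁
  -- primal subgradient at p₁
  obtain ⟨P₁, hP₁, hsub₁⟩ := prox_subgrad f hf hfconv l hl w₁ p₁ (hPf w₁)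
  obtain ⟨x₀, hx₀⟩ := hf.1
  -- Pfs w₂ = l⁻¹ • (w₁ - p₁)
  have hPfs2 : Pfs w₂ = l⁻¹ • (w₁ - p₁) := by
    apply moreau_unique f x₀ hx₀ hf.2 l hl w₁ p₁ P₁ hP₁ hsub₁
    rw [← hw]; exact hPfs w₂
  set r₁ : H := (2 : ℝ) • p₁ - w₁ with hr₁
  have hr₂ : (2 : ℝ) • Pfs w₂ - w₂ = -(l⁻¹ • r₁) := by
    rw [hPfs2, hw, hr₁]; module
  set p₂ : H := PgA r₁ with hp₂
  obtain ⟨P₂, hP₂, hsub₂⟩ := prox_subgrad h hgA hgAconv l hl r₁ p₂ (hPgA r₁)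
  obtain ⟨y₀, hy₀⟩ := hgA.1
  -- Pgs at -(l⁻¹ • r₁)
  have hPgs2 : Pgs (-(l⁻¹ • r₁)) = -(l⁻¹ • (r₁ - p₂)) := by
    have hneg := isProx_neg (fun v => ((l⁻¹ : ℝ) : EReal) * econj h v) (-(l⁻¹ • r₁))
      (Pgs (-(l⁻¹ • r₁))) (hPgs (-(l⁻¹ • r₁)))
    rw [neg_neg] at hneg
    have := moreau_unique h y₀ hy₀ hgA.2 l hl r₁ p₂ P₂ hP₂ hsub₂
      (-(Pgs (-(l⁻¹ • r₁)))) hneg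
    rw [← this, neg_neg]
  rw [hr₂, hPgs2, hw]
  module
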